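/- For every real s > 0 and a > 0, the quantity I(s,a) := ((s+a)/a)^a · ∫_0^1 s(1-t)^{s-1} t^a dt = ((s+a)/a)^a · Γ(s+1)Γ(a+1)/Γ(s+a+1) is uniformly bounded: sup_{s>0} sup_{a>0} I(s,a) is finite. Moreover lim_{s→∞} I(s,a) = a^{-a} Γ(a+1) for each fixed a > 0. -/

import Mathlib

open Real Filter MeasureTheory

lemma beta_real {u v : ℝ} (hu : 0 < u) (hv : 0 < v) :
    ∫ t in (0:ℝ)..1, t ^ (u-1) * (1-t) ^ (v-1)
      = Real.Gamma u * Real.Gamma v / Real.Gamma (u+v) := by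
  have key : Complex.Gamma u * Complex.Gamma v
      = Complex.Gamma (u+v) * Complex.betaIntegral u v := by
    have := Complex.Gamma_mul_Gamma_eq_betaIntegral
      (s := (u:ℂ)) (t := (v:ℂ)) (by simpa using hu) (by simpa using hv)
    simpa using this
  have hbeta : Complex.betaIntegral u v
      = ((∫ t in (0:ℝ)..1, t ^ (u-1) * (1-t) ^ (v-1) : ℝ) : ℂ) := by
    rw [Complex.betaIntegral]
    rw [← intervalIntegral.integral_ofReal]
    apply intervalIntegral.integral_congr
    intro x hx
    rw [Set.uIcc_of_le zero_le_one] at hx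
    obtain ⟨hx0, hx1⟩ := hx
    have e1 : (u:ℂ) - 1 = ((u-1 : ℝ) : ℂ) := by push_cast; ring
    have e2 : (v:ℂ) - 1 = ((v-1 : ℝ) : ℂ) := by push_cast; ring
    have e3 : 1 - (x:ℂ) = ((1-x : ℝ) : ℂ) := by push_cast; ring
    show (x:ℂ) ^ ((u:ℂ)-1) * (1 - (x:ℂ)) ^ ((v:ℂ)-1) = ((x ^ (u-1) * (1-x) ^ (v-1) : ℝ) : ℂ)
    rw [e1, e2, e3, ← Complex.ofReal_cpow hx0, ← Complex.ofReal_cpow (by linarith),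
      ← Complex.ofReal_mul]
  rw [hbeta] at key
  have h2 : ((Real.Gamma u * Real.Gamma v : ℝ) : ℂ)
      = ((Real.Gamma (u+v) * ∫ t in (0:ℝ)..1, t ^ (u-1) * (1-t) ^ (v-1) : ℝ) : ℂ) := by
    push_cast
    rw [← Complex.Gamma_ofReal, ← Complex.Gamma_ofReal, ← Complex.Gamma_ofReal]
    push_cast
    exact key
  have h3 := Complex.ofReal_injective h2
  have hpos := Real.Gamma_pos_of_pos (by linarith : (0:ℝ) < u + v)
  field_simp
  linarith [h3]

lemma logGamma_slope {x y z : ℝ} (hx : 0 < x) (hxy : x < y) (hyz : y < z) :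
    (Real.log (Real.Gamma y) - Real.log (Real.Gamma x)) / (y - x)
      ≤ (Real.log (Real.Gamma z) - Real.log (Real.Gamma y)) / (z - y) := by
  have := Real.convexOn_log_Gamma.slope_mono_adjacent
    (x := x) (y := y) (z := z) (Set.mem_Ioi.2 hx)
    (Set.mem_Ioi.2 (by linarith)) hxy hyz
  simpa [Function.comp] using this

lemma L1 {x c : ℝ} (hx : 0 < x) (hc : 0 < c) :
    Real.Gamma (x+1) * x ^ c ≤ Real.Gamma (x+1+c) := by
  have h1 := logGamma_slope hx (by linarith : x < x + 1) (by linarith : x + 1 < x + 1 + c)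
  have hg1 : (0:ℝ) < Real.Gamma x := Real.Gamma_pos_of_pos hx
  have hg2 : (0:ℝ) < Real.Gamma (x+1) := Real.Gamma_pos_of_pos (by linarith)
  have hg3 : (0:ℝ) < Real.Gamma (x+1+c) := Real.Gamma_pos_of_pos (by linarith)
  have hlog : Real.log (Real.Gamma (x+1)) - Real.log (Real.Gamma x) = Real.log x := by
    rw [Real.Gamma_add_one (ne_of_gt hx), Real.log_mul (ne_of_gt hx) (ne_of_gt hg1)]; ring
  rw [show x + 1 - x = (1:ℝ) by ring, show x + 1 + c - (x+1) = c by ring, div_one, hlog] at h1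
  have h2 : Real.log (Real.Gamma (x+1)) + Real.log x * c ≤ Real.log (Real.Gamma (x+1+c)) := by
    have := (le_div_iff₀ hc).mp h1
    linarith
  calc Real.Gamma (x+1) * x ^ c
      = Real.exp (Real.log (Real.Gamma (x+1)) + Real.log x * c) := by
        rw [Real.exp_add, Real.exp_log hg2, Real.rpow_def_of_pos hx]
    _ ≤ Real.Gamma (x+1+c) := by
        rw [← Real.exp_log hg3]; exact Real.exp_le_exp.2 h2

lemma L2 {x c : ℝ} (hx : 0 < x) (hc : 0 < c) :
    Real.Gamma (x+c) ≤ Real.Gamma x * (x+c) ^ c := by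
  have h1 := logGamma_slope hx (by linarith : x < x + c) (by linarith : x + c < x + c + 1)
  have hg1 : (0:ℝ) < Real.Gamma x := Real.Gamma_pos_of_pos hx
  have hg2 : (0:ℝ) < Real.Gamma (x+c) := Real.Gamma_pos_of_pos (by linarith)
  have hlog : Real.log (Real.Gamma (x+c+1)) - Real.log (Real.Gamma (x+c)) = Real.log (x+c) := by
    rw [Real.Gamma_add_one (by positivity : x+c ≠ 0),
      Real.log_mul (by positivity) (ne_of_gt hg2)]; ring
  rw [show x + c - x = c by ring, show x + c + 1 - (x+c) = (1:ℝ) by ring, div_one, hlog] at h1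
  have h2 : Real.log (Real.Gamma (x+c)) ≤ Real.log (Real.Gamma x) + Real.log (x+c) * c := by
    have := (div_le_iff₀ hc).mp h1
    linarith
  calc Real.Gamma (x+c)
      = Real.exp (Real.log (Real.Gamma (x+c))) := (Real.exp_log hg2).symm
    _ ≤ Real.exp (Real.log (Real.Gamma x) + Real.log (x+c) * c) := Real.exp_le_exp.2 h2
    _ = Real.Gamma x * (x+c) ^ c := by
        rw [Real.exp_add, Real.exp_log hg1, Real.rpow_def_of_pos (by linarith)]

lemma stirling_between {n : ℕ} (hn : 1 ≤ n) :
    Real.sqrt π ≤ Stirling.stirlingSeq n ∧ Stirling.stirlingSeq n ≤ Real.exp 1 / Real.sqrt 2 := by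
  obtain ⟨m, rfl⟩ := Nat.exists_eq_add_of_le hn
  constructor
  · have h := (Stirling.stirlingSeq'_antitone).le_of_tendsto
      (Stirling.tendsto_stirlingSeq_sqrt_pi.comp (tendsto_add_atTop_nat 1)) m
    simpa [Function.comp, Nat.succ_eq_add_one, Nat.add_comm] using h
  · have h := Stirling.stirlingSeq'_antitone (Nat.zero_le m)
    simpa [Function.comp, Nat.succ_eq_add_one, Nat.add_comm] using h

lemma fac_up {n : ℕ} (hn : 1 ≤ n) :
    (n.factorial : ℝ) ≤ Real.exp 1 * ((n:ℝ) ^ ((n:ℝ) + 1/2) * Real.exp (-(n:ℝ))) := by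
  have hnp : (0:ℝ) < n := by exact_mod_cast hn
  have hdef : (n.factorial : ℝ) = Stirling.stirlingSeq n * (Real.sqrt (2*n) * ((n:ℝ)/Real.exp 1)^n) := by
    rw [Stirling.stirlingSeq]
    field_simp
  have h1 := (stirling_between hn).2
  have hfac : Real.sqrt (2*n) * ((n:ℝ)/Real.exp 1)^n
      = Real.sqrt 2 * ((n:ℝ) ^ ((n:ℝ) + 1/2) * Real.exp (-(n:ℝ))) := by
    rw [Real.sqrt_mul (by norm_num), Real.rpow_add hnp, Real.rpow_natCast,
      div_pow, Real.exp_neg, ← Real.exp_one_pow (n := n)]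
    simp only [Real.sqrt_eq_rpow]
    ring
  have hpos : (0:ℝ) ≤ Real.sqrt (2*n) * ((n:ℝ)/Real.exp 1)^n := by positivity
  calc (n.factorial : ℝ) = Stirling.stirlingSeq n * (Real.sqrt (2*n) * ((n:ℝ)/Real.exp 1)^n) := hdef
    _ ≤ (Real.exp 1 / Real.sqrt 2) * (Real.sqrt (2*n) * ((n:ℝ)/Real.exp 1)^n) := by
        exact mul_le_mul_of_nonneg_right h1 hpos
    _ = Real.exp 1 * ((n:ℝ) ^ ((n:ℝ) + 1/2) * Real.exp (-(n:ℝ))) := by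
        rw [hfac]
        have : Real.sqrt 2 ≠ 0 := by positivity
        field_simp

lemma fac_low {n : ℕ} (hn : 1 ≤ n) :
    (n:ℝ) ^ ((n:ℝ) + 1/2) * Real.exp (-(n:ℝ)) ≤ (n.factorial : ℝ) := by
  have hnp : (0:ℝ) < n := by exact_mod_cast hn
  have hdef : (n.factorial : ℝ) = Stirling.stirlingSeq n * (Real.sqrt (2*n) * ((n:ℝ)/Real.exp 1)^n) := by
    rw [Stirling.stirlingSeq]; field_simp
  have h1 := (stirling_between hn).1
  have hfac : Real.sqrt (2*n) * ((n:ℝ)/Real.exp 1)^n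
      = Real.sqrt 2 * ((n:ℝ) ^ ((n:ℝ) + 1/2) * Real.exp (-(n:ℝ))) := by
    rw [Real.sqrt_mul (by norm_num), Real.rpow_add hnp, Real.rpow_natCast,
      div_pow, Real.exp_neg, ← Real.exp_one_pow (n := n)]
    simp only [Real.sqrt_eq_rpow]
    ring
  have hpos : (0:ℝ) ≤ (n:ℝ) ^ ((n:ℝ) + 1/2) * Real.exp (-(n:ℝ)) := by positivity
  have hπ : (1:ℝ) ≤ Real.sqrt π * Real.sqrt 2 := by
    rw [← Real.sqrt_mul pi_pos.le]
    rw [show (1:ℝ) = Real.sqrt 1 by simp]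
    apply Real.sqrt_le_sqrt
    nlinarith [pi_gt_three]
  calc (n:ℝ) ^ ((n:ℝ) + 1/2) * Real.exp (-(n:ℝ))
      ≤ (Real.sqrt π * Real.sqrt 2) * ((n:ℝ) ^ ((n:ℝ) + 1/2) * Real.exp (-(n:ℝ))) := by
        nlinarith [hpos, hπ]
    _ = Real.sqrt π * (Real.sqrt (2*n) * ((n:ℝ)/Real.exp 1)^n) := by rw [hfac]; ring
    _ ≤ Stirling.stirlingSeq n * (Real.sqrt (2*n) * ((n:ℝ)/Real.exp 1)^n) := by
        have : (0:ℝ) ≤ Real.sqrt (2*n) * ((n:ℝ)/Real.exp 1)^n := by positivity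
        exact mul_le_mul_of_nonneg_right h1 this
    _ = (n.factorial : ℝ) := hdef.symm


lemma gamma_up {x : ℝ} (hx : 1 ≤ x) :
    Real.Gamma (x+1) ≤ 24 * (x ^ (x + 1/2) * Real.exp (-x)) := by
  have hx0 : (0:ℝ) < x := by linarith
  set n := ⌊x⌋₊ with hn
  have hn1 : 1 ≤ n := Nat.le_floor (by exact_mod_cast hx)
  have hnx : (n:ℝ) ≤ x := Nat.floor_le (by linarith)
  have hxn : x < (n:ℝ) + 1 := Nat.lt_floor_add_one x
  have hnp : (0:ℝ) < n := by exact_mod_cast hn1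
  set d := x - (n:ℝ) with hd
  have hd0 : 0 ≤ d := by simp [hd]; linarith
  have hd1 : d ≤ 1 := by simp [hd]; linarith
  have hfact : Real.Gamma ((n:ℝ)+1) = n.factorial := Real.Gamma_nat_eq_factorial n
  -- step 1 : Γ(x+1) ≤ n! * (x+1)^d
  have step1 : Real.Gamma (x+1) ≤ (n.factorial : ℝ) * (x+1) ^ d := by
    rcases eq_or_lt_of_le hd0 with h | h
    · have hxe : x = (n:ℝ) := by simp [hd] at h; linarith
      rw [hxe, ← h, Real.rpow_zero, hfact, mul_one]
    · have := L2 (x := (n:ℝ)+1) (c := d) (by positivity) h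
      rw [show (n:ℝ)+1+d = x+1 by simp [hd]; ring] at this
      rwa [hfact] at this
  have hrw : x ^ (x + 1/2) = x ^ ((n:ℝ) + 1/2) * x ^ d := by
    rw [← Real.rpow_add hx0]; congr 1; rw [hd]; ring
  have hexp : Real.exp (-(n:ℝ)) = Real.exp (-x) * Real.exp d := by
    rw [← Real.exp_add]; congr 1; rw [hd]; ring
  have h2 : ((n:ℝ)) ^ ((n:ℝ) + 1/2) ≤ x ^ ((n:ℝ) + 1/2) :=
    Real.rpow_le_rpow (by positivity) hnx (by positivity)
  have h3 : (x+1) ^ d ≤ 2 * x ^ d := by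
    calc (x+1) ^ d ≤ (2*x) ^ d := Real.rpow_le_rpow (by linarith) (by linarith) hd0
      _ = 2 ^ d * x ^ d := Real.mul_rpow (by norm_num) (by linarith)
      _ ≤ 2 ^ (1:ℝ) * x ^ d := by
          have : (2:ℝ) ^ d ≤ 2 ^ (1:ℝ) :=
            Real.rpow_le_rpow_of_exponent_le one_le_two hd1
          have hxd : (0:ℝ) ≤ x ^ d := by positivity
          nlinarith
      _ = 2 * x ^ d := by rw [Real.rpow_one]
  have h4 : Real.exp d ≤ Real.exp 1 := Real.exp_le_exp.2 hd1
  have he : Real.exp 1 ≤ 3 := by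
    have := Real.exp_one_lt_d9; linarith
  have hposxd : (0:ℝ) ≤ x ^ d := by positivity
  have hposxn : (0:ℝ) ≤ x ^ ((n:ℝ)+1/2) := by positivity
  calc Real.Gamma (x+1) ≤ (n.factorial : ℝ) * (x+1) ^ d := step1
    _ ≤ (Real.exp 1 * ((n:ℝ) ^ ((n:ℝ) + 1/2) * Real.exp (-(n:ℝ)))) * (x+1)^d := by
        have := fac_up hn1
        have hpp : (0:ℝ) ≤ (x+1)^d := by positivity
        nlinarith
    _ ≤ (Real.exp 1 * (x ^ ((n:ℝ) + 1/2) * Real.exp (-(n:ℝ)))) * (x+1)^d := by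
        gcongr
    _ ≤ (Real.exp 1 * (x ^ ((n:ℝ) + 1/2) * Real.exp (-(n:ℝ)))) * (2 * x ^ d) := by
        gcongr
    _ = 2 * Real.exp 1 * Real.exp d * (x ^ (x+1/2) * Real.exp (-x)) := by
        rw [hrw, hexp]; ring
    _ ≤ 24 * (x ^ (x + 1/2) * Real.exp (-x)) := by
        have hep : (0:ℝ) < Real.exp 1 := Real.exp_pos 1
        have h4' : Real.exp d ≤ 3 := le_trans h4 he
        have hde : 0 < Real.exp d := Real.exp_pos d
        have hpp : (0:ℝ) ≤ x ^ (x+1/2) * Real.exp (-x) := by positivity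
        have hmm : Real.exp 1 * Real.exp d ≤ 3 * 3 :=
          mul_le_mul he h4' hde.le (by norm_num)
        nlinarith

lemma gamma_low {x : ℝ} (hx : 1 ≤ x) :
    x ^ (x + 1/2) * Real.exp (-x) ≤ 21 * Real.Gamma (x+1) := by
  have hx0 : (0:ℝ) < x := by linarith
  set n := ⌊x⌋₊ with hn
  have hn1 : 1 ≤ n := Nat.le_floor (by exact_mod_cast hx)
  have hnx : (n:ℝ) ≤ x := Nat.floor_le (by linarith)
  have hxn : x < (n:ℝ) + 1 := Nat.lt_floor_add_one x
  have hnp : (0:ℝ) < n := by exact_mod_cast hn1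
  set d := x - (n:ℝ) with hd
  have hd0 : 0 ≤ d := by simp [hd]; linarith
  have hd1 : d ≤ 1 := by simp [hd]; linarith
  have hfact : Real.Gamma ((n:ℝ)+1) = n.factorial := Real.Gamma_nat_eq_factorial n
  have step1 : (n.factorial : ℝ) * (n:ℝ) ^ d ≤ Real.Gamma (x+1) := by
    rcases eq_or_lt_of_le hd0 with h | h
    · have hxe : x = (n:ℝ) := by simp [hd] at h; linarith
      rw [hxe, ← h, Real.rpow_zero, hfact, mul_one]
    · have := L1 (x := (n:ℝ)) (c := d) hnp h
      rw [show (n:ℝ)+1+d = x+1 by simp [hd]; ring] at this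
      rwa [hfact] at this
  have step2 : (n:ℝ) ^ ((n:ℝ)+1/2) * Real.exp (-(n:ℝ)) * (n:ℝ) ^ d ≤ Real.Gamma (x+1) := by
    have := fac_low hn1
    have hnd : (0:ℝ) ≤ (n:ℝ) ^ d := by positivity
    nlinarith
  have hrwn : (n:ℝ) ^ ((n:ℝ)+1/2) * (n:ℝ) ^ d = (n:ℝ) ^ (x+1/2) := by
    rw [← Real.rpow_add hnp]; congr 1; rw [hd]; ring
  -- key : x^(x+1/2) ≤ 21 * exp(n - x) * n^(x+1/2)  (we use e^{x-n} ≥ 1)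
  have key : x ^ (x+1/2) ≤ 21 * (n:ℝ) ^ (x+1/2) := by
    have h1 : x ^ (x+1/2) = ((x/(n:ℝ)) * n) ^ (x+1/2) := by
      rw [div_mul_cancel₀]; exact ne_of_gt hnp
    have h2 : ((x/(n:ℝ)) * n) ^ (x+1/2) = (x/(n:ℝ)) ^ (x+1/2) * (n:ℝ) ^ (x+1/2) :=
      Real.mul_rpow (by positivity) (by positivity)
    have h3 : (x/(n:ℝ)) ^ (x+1/2) ≤ Real.exp ((1/(n:ℝ)) * (x+1/2)) := by
      calc (x/(n:ℝ)) ^ (x+1/2) ≤ (Real.exp (1/(n:ℝ))) ^ (x+1/2) := by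
            apply Real.rpow_le_rpow (by positivity) _ (by positivity)
            have : x / (n:ℝ) ≤ 1 + 1/(n:ℝ) := by
              rw [div_le_iff₀ hnp]; rw [add_mul, one_mul, div_mul_cancel₀ _ (ne_of_gt hnp)]
              linarith
            calc x/(n:ℝ) ≤ 1 + 1/(n:ℝ) := this
              _ ≤ Real.exp (1/(n:ℝ)) := by
                  have := Real.add_one_le_exp (1/(n:ℝ)); linarith
        _ = Real.exp ((1/(n:ℝ)) * (x+1/2)) := by
            rw [← Real.exp_mul]
    have h4 : (1/(n:ℝ)) * (x+1/2) ≤ 3 := by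
      rw [div_mul_eq_mul_div, one_mul, div_le_iff₀ hnp]
      have : (1:ℝ) ≤ (n:ℝ) := by exact_mod_cast hn1
      nlinarith
    have h5 : Real.exp ((1/(n:ℝ)) * (x+1/2)) ≤ Real.exp 3 := Real.exp_le_exp.2 h4
    have h6 : Real.exp 3 ≤ 21 := by
      have he := Real.exp_one_lt_d9
      have : Real.exp 3 = (Real.exp 1)^3 := by
        rw [← Real.exp_nat_mul]; norm_num
      rw [this]
      have := pow_le_pow_left₀ (Real.exp_pos 1).le he.le 3
      nlinarith
    have hnn : (0:ℝ) ≤ (n:ℝ) ^ (x+1/2) := by positivity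
    calc x ^ (x+1/2) = (x/(n:ℝ)) ^ (x+1/2) * (n:ℝ) ^ (x+1/2) := by rw [h1, h2]
      _ ≤ 21 * (n:ℝ) ^ (x+1/2) := by nlinarith
  have hexp : Real.exp (-x) ≤ Real.exp (-(n:ℝ)) := Real.exp_le_exp.2 (by linarith)
  calc x ^ (x+1/2) * Real.exp (-x) ≤ (21 * (n:ℝ) ^ (x+1/2)) * Real.exp (-(n:ℝ)) := by
        have h1 : (0:ℝ) ≤ x ^ (x+1/2) := by positivity
        have h2 : (0:ℝ) ≤ Real.exp (-x) := (Real.exp_pos _).le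
        have h3 : (0:ℝ) ≤ (n:ℝ) ^ (x+1/2) := by positivity
        nlinarith [Real.exp_pos (-(n:ℝ))]
    _ = 21 * ((n:ℝ) ^ ((n:ℝ)+1/2) * Real.exp (-(n:ℝ)) * (n:ℝ) ^ d) := by
        rw [show (n:ℝ) ^ ((n:ℝ)+1/2) * Real.exp (-(n:ℝ)) * (n:ℝ) ^ d
            = (n:ℝ) ^ ((n:ℝ)+1/2) * (n:ℝ) ^ d * Real.exp (-(n:ℝ)) by ring, hrwn]
        ring
    _ ≤ 21 * Real.Gamma (x+1) := by nlinarith [step2]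


-- Γ(x+1) ≤ 1 for x ∈ [0,1]
lemma G2 {x : ℝ} (h0 : 0 ≤ x) (h1 : x ≤ 1) : Real.Gamma (x+1) ≤ 1 := by
  rcases eq_or_lt_of_le h0 with h | h
  · rw [← h]; simp [Real.Gamma_one]
  rcases eq_or_lt_of_le h1 with h' | h'
  · rw [h']; rw [show (1:ℝ)+1 = 2 by norm_num, Real.Gamma_two]
  have := Real.Gamma_mul_add_mul_le_rpow_Gamma_mul_rpow_Gamma
    (s := 1) (t := 2) (a := 1-x) (b := x) one_pos two_pos (by linarith) h (by ring)
  rw [Real.Gamma_one, Real.Gamma_two, Real.one_rpow, Real.one_rpow] at this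
  calc Real.Gamma (x+1) = Real.Gamma ((1-x) * 1 + x * 2) := by ring_nf
    _ ≤ 1 * 1 := this
    _ = 1 := by norm_num

-- Γ(x) ≥ 1/12 for 0 < x ≤ 3
lemma Gmin {x : ℝ} (h0 : 0 < x) (h3 : x ≤ 3) : 1/12 ≤ Real.Gamma x := by
  have h2 : (1:ℝ) ≤ Real.Gamma (x+2) := by
    rcases le_or_gt (x+2) 2 with h | h
    · exfalso; linarith
    · have := Real.Gamma_strictMonoOn_Ici (a := 2) (b := x+2)
        (by simp) (by simp; linarith) h
      rw [Real.Gamma_two] at this; linarith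
  have hrec : Real.Gamma (x+2) = (x+1) * (x * Real.Gamma x) := by
    rw [show x+2 = (x+1)+1 by ring, Real.Gamma_add_one (by positivity),
      Real.Gamma_add_one (ne_of_gt h0)]
  have hg : 0 < Real.Gamma x := Real.Gamma_pos_of_pos h0
  have hb : (x+1)*x ≤ 12 := by nlinarith
  nlinarith [mul_le_mul_of_nonneg_right hb hg.le]

-- ((s+a)/a)^a ≤ exp s
lemma pow_small {s a : ℝ} (hs : 0 ≤ s) (ha : 0 < a) : ((s+a)/a) ^ a ≤ Real.exp s := by
  have h1 : (s+a)/a ≤ Real.exp (s/a) := by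
    have : (s+a)/a = s/a + 1 := by field_simp
    rw [this]
    exact Real.add_one_le_exp (s/a)
  calc ((s+a)/a) ^ a ≤ (Real.exp (s/a)) ^ a :=
        Real.rpow_le_rpow (by positivity) h1 ha.le
    _ = Real.exp (s/a * a) := by rw [← Real.exp_mul]
    _ = Real.exp s := by rw [div_mul_cancel₀ _ (ne_of_gt ha)]

-- a^(-a) ≤ e for 0 < a ≤ 1
lemma aa_le_e {a : ℝ} (h0 : 0 < a) (h1 : a ≤ 1) : a ^ (-a) ≤ Real.exp 1 := by
  rw [Real.rpow_def_of_pos h0]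
  apply Real.exp_le_exp.2
  have hlog : Real.log (1/a) ≤ 1/a - 1 := Real.log_le_sub_one_of_pos (by positivity)
  rw [one_div, Real.log_inv] at hlog
  have : -Real.log a ≤ 1/a - 1 := by rw [← Real.log_inv, ← one_div] at hlog ⊢; exact hlog
  have h2 : Real.log a * (-a) = a * (-Real.log a) := by ring
  rw [h2]
  calc a * (-Real.log a) ≤ a * (1/a - 1) := by nlinarith
    _ = 1 - a := by field_simp
    _ ≤ 1 := by linarith

lemma log_ratio {s a : ℝ} (hs : 0 < s) (ha : 0 < a) :
    (s/(s+a)) ^ s ≤ Real.exp (-(s*a/(s+a))) := by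
  have hsa : 0 < s + a := by linarith
  have h1 : a/(s+a) ≤ Real.log ((s+a)/s) := by
    have hlog : Real.log (s/(s+a)) ≤ s/(s+a) - 1 := Real.log_le_sub_one_of_pos (by positivity)
    have : Real.log ((s+a)/s) = - Real.log (s/(s+a)) := by
      rw [← Real.log_inv]; congr 1; field_simp
    rw [this]
    have : s/(s+a) - 1 = -(a/(s+a)) := by field_simp; ring
    rw [this] at hlog; linarith
  rw [Real.rpow_def_of_pos (by positivity)]
  apply Real.exp_le_exp.2
  have hlog2 : Real.log (s/(s+a)) = - Real.log ((s+a)/s) := by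
    rw [← Real.log_inv]; congr 1; field_simp
  rw [hlog2]
  have : s * (a/(s+a)) ≤ s * Real.log ((s+a)/s) := by nlinarith
  calc -Real.log ((s+a)/s) * s = -(s * Real.log ((s+a)/s)) := by ring
    _ ≤ -(s * (a/(s+a))) := by linarith
    _ = -(s*a/(s+a)) := by ring

lemma sqrt_u {u : ℝ} (hu : 0 ≤ u) : u ^ ((1:ℝ)/2) ≤ Real.exp u := by
  have h1 : u ≤ Real.exp (2*u) := by
    have := Real.add_one_le_exp (2*u); linarith
  calc u ^ ((1:ℝ)/2) ≤ (Real.exp (2*u)) ^ ((1:ℝ)/2) :=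
        Real.rpow_le_rpow hu h1 (by norm_num)
    _ = Real.exp (2*u*(1/2)) := by rw [← Real.exp_mul]
    _ = Real.exp u := by ring_nf


lemma bounded {s a : ℝ} (hs : 0 < s) (ha : 0 < a) :
    ((s+a)/a) ^ a * (Real.Gamma (s+1) * Real.Gamma (a+1) / Real.Gamma (s+a+1)) ≤ 12096 := by
  have hsa : 0 < s + a := by linarith
  have hg1 : 0 < Real.Gamma (s+1) := Real.Gamma_pos_of_pos (by linarith)
  have hg2 : 0 < Real.Gamma (a+1) := Real.Gamma_pos_of_pos (by linarith)
  have hg3 : 0 < Real.Gamma (s+a+1) := Real.Gamma_pos_of_pos (by linarith)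
  have hP : (0:ℝ) < ((s+a)/a) ^ a := by positivity
  have he3 : Real.exp 1 ≤ 3 := by have := Real.exp_one_lt_d9; linarith
  rcases le_or_gt s 1 with hs1 | hs1
  · rcases le_or_gt a 1 with ha1 | ha1
    · -- both small
      have h1 : ((s+a)/a) ^ a ≤ 3 := by
        calc ((s+a)/a) ^ a ≤ Real.exp s := pow_small hs.le ha
          _ ≤ Real.exp 1 := Real.exp_le_exp.2 hs1
          _ ≤ 3 := he3
      have h2 : Real.Gamma (s+1) ≤ 1 := G2 hs.le hs1
      have h3 : Real.Gamma (a+1) ≤ 1 := G2 ha.le ha1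
      have h4 : 1/12 ≤ Real.Gamma (s+a+1) := Gmin (by linarith) (by linarith)
      have h5 : Real.Gamma (s+1) * Real.Gamma (a+1) / Real.Gamma (s+a+1) ≤ 12 := by
        rw [div_le_iff₀ hg3]
        nlinarith
      nlinarith
    · -- s ≤ 1 < a
      have h1 : ((s+a)/a) ^ a ≤ 3 := by
        calc ((s+a)/a) ^ a ≤ Real.exp s := pow_small hs.le ha
          _ ≤ Real.exp 1 := Real.exp_le_exp.2 hs1
          _ ≤ 3 := he3
      have h2 : Real.Gamma (s+1) ≤ 1 := G2 hs.le hs1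
      have h4 : Real.Gamma (a+1) ≤ Real.Gamma (s+a+1) := by
        have := L1 (x := a) (c := s) ha hs
        have has : (1:ℝ) ≤ a ^ s := Real.one_le_rpow ha1.le hs.le
        rw [show a+1+s = s+a+1 by ring] at this
        nlinarith
      have h5 : Real.Gamma (s+1) * Real.Gamma (a+1) / Real.Gamma (s+a+1) ≤ 1 := by
        rw [div_le_one hg3]
        nlinarith
      nlinarith
  · rcases le_or_gt a 1 with ha1 | ha1
    · -- a ≤ 1 < s
      have h4 : Real.Gamma (s+1) * s ^ a ≤ Real.Gamma (s+a+1) := by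
        have := L1 (x := s) (c := a) hs ha
        rwa [show s+1+a = s+a+1 by ring] at this
      have hsapos : (0:ℝ) < s ^ a := by positivity
      have h3 : Real.Gamma (a+1) ≤ 1 := G2 ha.le ha1
      have hA : Real.Gamma (s+1) ≤ (s ^ a)⁻¹ * Real.Gamma (s+a+1) := by
        rw [inv_mul_eq_div, le_div_iff₀ hsapos]; exact h4
      have h5 : Real.Gamma (s+1) * Real.Gamma (a+1) / Real.Gamma (s+a+1) ≤ (s ^ a)⁻¹ := by
        rw [div_le_iff₀ hg3]
        calc Real.Gamma (s+1) * Real.Gamma (a+1) ≤ Real.Gamma (s+1) * 1 := by nlinarith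
          _ = Real.Gamma (s+1) := by ring
          _ ≤ (s ^ a)⁻¹ * Real.Gamma (s+a+1) := hA
      have key : ((s+a)/a) ^ a * (s ^ a)⁻¹ ≤ 6 := by
        have e1 : ((s+a)/a) ^ a * (s ^ a)⁻¹ = ((s+a)/(a*s)) ^ a := by
          rw [Real.div_rpow (by linarith) ha.le, Real.div_rpow (by linarith) (by positivity),
            Real.mul_rpow ha.le hs.le]
          field_simp
        rw [e1]
        have e2 : (s+a)/(a*s) ≤ 2/a := by
          rw [div_le_div_iff₀ (by positivity) ha]
          nlinarith
        calc ((s+a)/(a*s)) ^ a ≤ (2/a) ^ a :=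
              Real.rpow_le_rpow (by positivity) e2 ha.le
          _ = 2 ^ a * a ^ (-a) := by
              rw [Real.div_rpow (by norm_num) ha.le, Real.rpow_neg ha.le, div_eq_mul_inv]
          _ ≤ 2 * Real.exp 1 := by
              have b1 : (2:ℝ) ^ a ≤ 2 ^ (1:ℝ) :=
                Real.rpow_le_rpow_of_exponent_le one_le_two ha1
              rw [Real.rpow_one] at b1
              have b2 := aa_le_e ha ha1
              have b3 : (0:ℝ) < a ^ (-a) := by positivity
              nlinarith [Real.exp_pos 1]
          _ ≤ 6 := by nlinarith
      calc ((s+a)/a) ^ a * (Real.Gamma (s+1) * Real.Gamma (a+1) / Real.Gamma (s+a+1))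
          ≤ ((s+a)/a) ^ a * (s ^ a)⁻¹ := by nlinarith
        _ ≤ 6 := key
        _ ≤ 12096 := by norm_num
    · -- both ≥ 1 : Stirling case
      set Es := s ^ (s + 1/2) * Real.exp (-s) with hEs
      set Ea := a ^ (a + 1/2) * Real.exp (-a) with hEa
      set Esa := (s+a) ^ ((s+a) + 1/2) * Real.exp (-(s+a)) with hEsa
      have hEspos : 0 < Es := by rw [hEs]; positivity
      have hEapos : 0 < Ea := by rw [hEa]; positivity
      have hEsapos : 0 < Esa := by rw [hEsa]; positivity
      have b1 : Real.Gamma (s+1) ≤ 24 * Es := gamma_up hs1.le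
      have b2 : Real.Gamma (a+1) ≤ 24 * Ea := gamma_up ha1.le
      have b3 : Esa ≤ 21 * Real.Gamma (s+a+1) := by
        have := gamma_low (x := s+a) (by linarith)
        rwa [show s+a+1 = (s+a)+1 by ring]
      have hdiv : Real.Gamma (s+1) * Real.Gamma (a+1) / Real.Gamma (s+a+1)
          ≤ (24 * Es) * (24 * Ea) / (Esa / 21) := by
        apply div_le_div₀ (by positivity) (by nlinarith) (by positivity)
        exact (div_le_iff₀ (by norm_num : (0:ℝ) < 21)).2 (by linarith)
      have hiden : ((s+a)/a) ^ a * (Es * Ea / Esa)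
          = (s/(s+a)) ^ s * (s*a/(s+a)) ^ ((1:ℝ)/2) := by
        rw [hEs, hEa, hEsa]
        rw [Real.rpow_add hs, Real.rpow_add ha,
          show (s+a) + 1/2 = s + (a + 1/2) by ring,
          Real.rpow_add hsa, Real.rpow_add hsa,
          Real.div_rpow (by linarith) ha.le,
          Real.div_rpow hs.le (by linarith),
          Real.div_rpow (by positivity) (by linarith),
          Real.mul_rpow hs.le ha.le,
          show Real.exp (-(s+a)) = Real.exp (-s) * Real.exp (-a) by
            rw [← Real.exp_add]; ring_nf]
        have n1 : a ^ a ≠ 0 := by positivity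
        have n2 : (s+a) ^ s ≠ 0 := by positivity
        have n3 : (s+a) ^ a ≠ 0 := by positivity
        have n4 : (s+a) ^ ((1:ℝ)/2) ≠ 0 := by positivity
        have n5 : Real.exp (-(s+a)) ≠ 0 := (Real.exp_pos _).ne'
        field_simp
      have hkey : ((s+a)/a) ^ a * (Es * Ea / Esa) ≤ 1 := by
        rw [hiden]
        have k1 := log_ratio hs ha
        have k2 := sqrt_u (u := s*a/(s+a)) (by positivity)
        calc (s/(s+a)) ^ s * (s*a/(s+a)) ^ ((1:ℝ)/2)
            ≤ Real.exp (-(s*a/(s+a))) * Real.exp (s*a/(s+a)) := by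
              apply mul_le_mul k1 k2 (by positivity) (by positivity)
          _ = 1 := by rw [← Real.exp_add]; simp
      have e6 : (24 * Es) * (24 * Ea) / (Esa / 21) = 12096 * (Es * Ea / Esa) := by
        field_simp; ring
      calc ((s+a)/a) ^ a * (Real.Gamma (s+1) * Real.Gamma (a+1) / Real.Gamma (s+a+1))
          ≤ ((s+a)/a) ^ a * (12096 * (Es * Ea / Esa)) := by
            rw [← e6]; exact mul_le_mul_of_nonneg_left hdiv hP.le
        _ = 12096 * (((s+a)/a) ^ a * (Es * Ea / Esa)) := by ring
        _ ≤ 12096 * 1 := by nlinarith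
        _ = 12096 := by norm_num


lemma tendsto_part {a : ℝ} (ha : 0 < a) :
    Tendsto (fun s : ℝ =>
        ((s+a)/a) ^ a * (Real.Gamma (s+1) * Real.Gamma (a+1) / Real.Gamma (s+a+1)))
      atTop (nhds (a ^ (-a) * Real.Gamma (a+1))) := by
  set g : ℝ → ℝ := fun s => (s+a) ^ a * (Real.Gamma (s+1) / Real.Gamma (s+a+1)) with hg
  -- squeeze for g
  have hlow : ∀ᶠ s in atTop, ((s+a)/(s+a+1)) ^ a ≤ g s := by
    filter_upwards [eventually_ge_atTop (1:ℝ)] with s hs1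
    have hs : (0:ℝ) < s := by linarith
    have hg1 : 0 < Real.Gamma (s+1) := Real.Gamma_pos_of_pos (by linarith)
    have hg3 : 0 < Real.Gamma (s+a+1) := Real.Gamma_pos_of_pos (by linarith)
    have h := L2 (x := s+1) (c := a) (by linarith) ha
    rw [show s+1+a = s+a+1 by ring] at h
    have hpow : (0:ℝ) < (s+1+a) ^ a := by positivity
    have key : 1 / (s+1+a) ^ a ≤ Real.Gamma (s+1) / Real.Gamma (s+a+1) := by
      rw [div_le_div_iff₀ hpow hg3]
      calc 1 * Real.Gamma (s+a+1) = Real.Gamma (s+a+1) := by ring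
        _ ≤ Real.Gamma (s+1) * (s+1+a) ^ a := by
            rw [show s+a+1 = s+1+a by ring] at *; exact h
    calc ((s+a)/(s+a+1)) ^ a = (s+a) ^ a / (s+a+1) ^ a :=
          Real.div_rpow (by linarith : (0:ℝ) ≤ s+a) (by linarith : (0:ℝ) ≤ s+a+1) a
      _ = (s+a) ^ a * (1 / (s+1+a) ^ a) := by
          rw [show s+a+1 = s+1+a by ring]; ring
      _ ≤ (s+a) ^ a * (Real.Gamma (s+1) / Real.Gamma (s+a+1)) := by
          apply mul_le_mul_of_nonneg_left key (by positivity)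
  have hup : ∀ᶠ s in atTop, g s ≤ ((s+a)/s) ^ a := by
    filter_upwards [eventually_ge_atTop (1:ℝ)] with s hs1
    have hs : (0:ℝ) < s := by linarith
    have hg3 : 0 < Real.Gamma (s+a+1) := Real.Gamma_pos_of_pos (by linarith)
    have h := L1 (x := s) (c := a) hs ha
    rw [show s+1+a = s+a+1 by ring] at h
    have hpow : (0:ℝ) < s ^ a := by positivity
    have key : Real.Gamma (s+1) / Real.Gamma (s+a+1) ≤ 1 / s ^ a := by
      rw [div_le_div_iff₀ hg3 hpow]
      nlinarith
    calc g s ≤ (s+a) ^ a * (1 / s ^ a) := by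
          apply mul_le_mul_of_nonneg_left key (by positivity)
      _ = (s+a) ^ a / s ^ a := by ring
      _ = ((s+a)/s) ^ a := (Real.div_rpow (by linarith : (0:ℝ) ≤ s+a) hs.le a).symm
  -- limits of the two bounds
  have hcont : ContinuousAt (fun x : ℝ => x ^ a) 1 :=
    Real.continuousAt_rpow_const 1 a (Or.inl one_ne_zero)
  have lim1 : Tendsto (fun s : ℝ => ((s+a)/(s+a+1)) ^ a) atTop (nhds 1) := by
    have base : Tendsto (fun s : ℝ => (s+a)/(s+a+1)) atTop (nhds 1) := by
      have h1 : Tendsto (fun s : ℝ => 1 - (s+a+1)⁻¹) atTop (nhds (1 - 0)) := by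
        apply Tendsto.sub tendsto_const_nhds
        apply Tendsto.comp tendsto_inv_atTop_zero
        have := tendsto_atTop_add_const_right atTop (a+1) (tendsto_id (α := ℝ))
        apply this.congr
        intro x; simp only [id_eq]; ring
      rw [sub_zero] at h1
      apply h1.congr'
      filter_upwards [eventually_gt_atTop (0:ℝ)] with s hs
      have : s + a + 1 ≠ 0 := by positivity
      field_simp; ring
    have := hcont.tendsto.comp base
    simpa [Real.one_rpow, Function.comp_def] using this
  have lim2 : Tendsto (fun s : ℝ => ((s+a)/s) ^ a) atTop (nhds 1) := by
    have base : Tendsto (fun s : ℝ => (s+a)/s) atTop (nhds 1) := by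
      have h1 : Tendsto (fun s : ℝ => 1 + a/s) atTop (nhds (1 + 0)) := by
        apply Tendsto.add tendsto_const_nhds
        exact Tendsto.div_atTop tendsto_const_nhds tendsto_id
      rw [add_zero] at h1
      apply h1.congr'
      filter_upwards [eventually_gt_atTop (0:ℝ)] with s hs
      field_simp
    have := hcont.tendsto.comp base
    simpa [Real.one_rpow, Function.comp_def] using this
  have hgtendsto : Tendsto g atTop (nhds 1) :=
    tendsto_of_tendsto_of_tendsto_of_le_of_le' lim1 lim2 hlow hup
  have hmain : Tendsto (fun s : ℝ => (a ^ (-a) * Real.Gamma (a+1)) * g s) atTop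
      (nhds (a ^ (-a) * Real.Gamma (a+1))) := by
    have := Tendsto.const_mul (a ^ (-a) * Real.Gamma (a+1)) hgtendsto
    simpa using this
  apply hmain.congr'
  filter_upwards [eventually_gt_atTop (0:ℝ)] with s hs
  have hsa : (0:ℝ) < s + a := by linarith
  rw [hg]
  have e1 : ((s+a)/a) ^ a = (s+a) ^ a * a ^ (-a) := by
    rw [Real.div_rpow hsa.le ha.le, Real.rpow_neg ha.le, div_eq_mul_inv]
  rw [e1]; ring

lemma integral_part {s a : ℝ} (hs : 0 < s) (ha : 0 < a) :
    (∫ t in Set.Ioo (0:ℝ) 1, s * (1-t) ^ (s-1) * t ^ a)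
      = Real.Gamma (s+1) * Real.Gamma (a+1) / Real.Gamma (s+a+1) := by
  have h1 : (∫ t in Set.Ioo (0:ℝ) 1, s * (1-t) ^ (s-1) * t ^ a)
      = ∫ t in (0:ℝ)..1, s * (1-t) ^ (s-1) * t ^ a := by
    rw [intervalIntegral.integral_of_le zero_le_one,
      MeasureTheory.integral_Ioc_eq_integral_Ioo]
  have h2 : (∫ t in (0:ℝ)..1, s * (1-t) ^ (s-1) * t ^ a)
      = s * ∫ t in (0:ℝ)..1, t ^ ((a+1)-1) * (1-t) ^ (s-1) := by
    rw [← intervalIntegral.integral_const_mul]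
    apply intervalIntegral.integral_congr
    intro x hx
    rw [show (a+1)-1 = a by ring]
    ring
  rw [h1, h2, beta_real (by linarith : (0:ℝ) < a+1) hs]
  rw [Real.Gamma_add_one (ne_of_gt hs), show a+1+s = s+a+1 by ring]
  have hg3 : 0 < Real.Gamma (s+a+1) := Real.Gamma_pos_of_pos (by linarith)
  field_simp

/-- The quantity `I(s,a) = ((s+a)/a)^a ∫₀¹ s (1-t)^(s-1) t^a dt
= ((s+a)/a)^a Γ(s+1)Γ(a+1)/Γ(s+a+1)` is uniformly bounded over `s, a > 0`,
and for each fixed `a > 0`, `I(s,a) → a^(-a) Γ(a+1)` as `s → ∞`. -/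
theorem stmt18 :
    (∀ s : ℝ, 0 < s → ∀ a : ℝ, 0 < a →
      ((s+a)/a) ^ a * ∫ t in Set.Ioo (0:ℝ) 1, s * (1-t) ^ (s-1) * t ^ a
        = ((s+a)/a) ^ a * (Real.Gamma (s+1) * Real.Gamma (a+1) / Real.Gamma (s+a+1))) ∧
    (∃ C : ℝ, ∀ s : ℝ, 0 < s → ∀ a : ℝ, 0 < a →
      ((s+a)/a) ^ a * (Real.Gamma (s+1) * Real.Gamma (a+1) / Real.Gamma (s+a+1)) ≤ C) ∧
    (∀ a : ℝ, 0 < a →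
      Tendsto (fun s : ℝ =>
          ((s+a)/a) ^ a * (Real.Gamma (s+1) * Real.Gamma (a+1) / Real.Gamma (s+a+1)))
        atTop (nhds (a ^ (-a) * Real.Gamma (a+1)))) := by
  refine ⟨?_, ⟨12096, ?_⟩, ?_⟩
  · intro s hs a ha
    rw [integral_part hs ha]
  · intro s hs a ha
    exact bounded hs ha
  · intro a ha
    exact tendsto_part ha
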